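/- arXiv:1808.08467 — 4 statements merged into one kernel-verified Lean document; each statement's English description precedes it below -/
import Mathlib

section
/- Let K₁, K₂, p∞₁, p∞₂, pⁿ, F₁, F₂, r₁, r₂, v₁, v₂ be real numbers, let α₁ ∈ (0,1) and set α₂ = 1 − α₁, E_j = F_j − pⁿ·α_j, ρ_j = r_j/α_j, and p_j = (K_j − 1)·(E_j/α_j − ρ_j·v_j²/2) − K_j·p∞_j for j = 1,2. Then p₁ = p₂ if and only if A·α₁² + B·α₁ + C = 0, where A = (K₁−1)pⁿ + K₁p∞₁ − (K₂−1)pⁿ − K₂p∞₂, B = −(K₁−1)F₁ − (K₂−1)F₂ − K₁p∞₁ + K₂p∞₂ + (1/2)(K₁−1)r₁v₁² + (1/2)(K₂−1)r₂v₂² + (K₂−K₁)pⁿ, and C = (K₁−1)F₁ − (1/2)(K₁−1)r₁v₁². -/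
/-- In the third step of the scheme for the one-pressure two-fluid model,
the equal-pressure condition `p₁ = p₂` is equivalent to the quadratic
equation `A·α₁² + B·α₁ + C = 0` with the coefficients (39)–(41). -/
theorem pressure_equality_iff_quadratic
    (K₁ K₂ pinf₁ pinf₂ pn F₁ F₂ r₁ r₂ v₁ v₂ : ℝ)
    (α₁ : ℝ) (hα₁ : α₁ ∈ Set.Ioo (0 : ℝ) 1)
    (α₂ E₁ E₂ ρ₁ ρ₂ p₁ p₂ A B C : ℝ)
    (hα₂ : α₂ = 1 - α₁)
    (hE₁ : E₁ = F₁ - pn * α₁) (hE₂ : E₂ = F₂ - pn * α₂)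
    (hρ₁ : ρ₁ = r₁ / α₁) (hρ₂ : ρ₂ = r₂ / α₂)
    (hp₁ : p₁ = (K₁ - 1) * (E₁ / α₁ - ρ₁ * v₁ ^ 2 / 2) - K₁ * pinf₁)
    (hp₂ : p₂ = (K₂ - 1) * (E₂ / α₂ - ρ₂ * v₂ ^ 2 / 2) - K₂ * pinf₂)
    (hA : A = (K₁ - 1) * pn + K₁ * pinf₁ - (K₂ - 1) * pn - K₂ * pinf₂)
    (hB : B = -(K₁ - 1) * F₁ - (K₂ - 1) * F₂ - K₁ * pinf₁ + K₂ * pinf₂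
      + (1 / 2) * (K₁ - 1) * r₁ * v₁ ^ 2 + (1 / 2) * (K₂ - 1) * r₂ * v₂ ^ 2
      + (K₂ - K₁) * pn)
    (hC : C = (K₁ - 1) * F₁ - (1 / 2) * (K₁ - 1) * r₁ * v₁ ^ 2) :
    p₁ = p₂ ↔ A * α₁ ^ 2 + B * α₁ + C = 0 := by
  obtain ⟨h0, h1⟩ := hα₁
  subst hα₂
  have hne₁ : α₁ ≠ 0 := ne_of_gt h0
  have hne₂ : (1 - α₁) ≠ 0 := by intro h; linarith
  have key : (p₁ - p₂) * (α₁ * (1 - α₁)) = A * α₁ ^ 2 + B * α₁ + C := by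
    subst hE₁ hE₂ hρ₁ hρ₂ hp₁ hp₂ hA hB hC
    field_simp
    ring
  rw [← key]
  constructor
  · intro h; rw [h]; ring
  · intro h
    rcases mul_eq_zero.mp h with h' | h'
    · linarith [sub_eq_zero.mp h']
    · exact absurd h' (mul_ne_zero hne₁ hne₂)
end

section
/- Let K₁ > 1, K₂ > 1 and let p∞₁, p∞₂, pⁿ, F₁, F₂, r₁, r₂, v₁, v₂ be real numbers satisfying F₁ > (1/2)r₁v₁² and F₂ > (1/2)r₂v₂². Define A = (K₁−1)pⁿ + K₁p∞₁ − (K₂−1)pⁿ − K₂p∞₂, B = −(K₁−1)F₁ − (K₂−1)F₂ − K₁p∞₁ + K₂p∞₂ + (1/2)(K₁−1)r₁v₁² + (1/2)(K₂−1)r₂v₂² + (K₂−K₁)pⁿ, C = (K₁−1)F₁ − (1/2)(K₁−1)r₁v₁², and Q(X) = A·X² + B·X + C. Then Q(0) = (K₁−1)(F₁ − (1/2)r₁v₁²) > 0, Q(1) = −(K₂−1)(F₂ − (1/2)r₂v₂²) < 0, and Q has exactly one root in the open interval (0,1). -/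
/-- Well-posedness of the third step of the scheme: under positivity of the
non-kinetic parts of the energies, the quadratic `Q` with coefficients
(39)–(41) satisfies `Q(0) > 0`, `Q(1) < 0`, and has exactly one root in
the open interval `(0,1)`. -/
theorem quadratic_unique_root_in_unit_interval
    (K₁ K₂ pinf₁ pinf₂ pn F₁ F₂ r₁ r₂ v₁ v₂ : ℝ)
    (hK₁ : 1 < K₁) (hK₂ : 1 < K₂)
    (hF₁ : (1 / 2) * r₁ * v₁ ^ 2 < F₁) (hF₂ : (1 / 2) * r₂ * v₂ ^ 2 < F₂)
    (A B C : ℝ) (Q : ℝ → ℝ)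
    (hA : A = (K₁ - 1) * pn + K₁ * pinf₁ - (K₂ - 1) * pn - K₂ * pinf₂)
    (hB : B = -(K₁ - 1) * F₁ - (K₂ - 1) * F₂ - K₁ * pinf₁ + K₂ * pinf₂
      + (1 / 2) * (K₁ - 1) * r₁ * v₁ ^ 2 + (1 / 2) * (K₂ - 1) * r₂ * v₂ ^ 2
      + (K₂ - K₁) * pn)
    (hC : C = (K₁ - 1) * F₁ - (1 / 2) * (K₁ - 1) * r₁ * v₁ ^ 2)
    (hQ : ∀ X, Q X = A * X ^ 2 + B * X + C) :
    Q 0 = (K₁ - 1) * (F₁ - (1 / 2) * r₁ * v₁ ^ 2) ∧ 0 < Q 0 ∧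
    Q 1 = -(K₂ - 1) * (F₂ - (1 / 2) * r₂ * v₂ ^ 2) ∧ Q 1 < 0 ∧
    (∃! x : ℝ, x ∈ Set.Ioo (0 : ℝ) 1 ∧ Q x = 0) := by
  have hQ0 : Q 0 = (K₁ - 1) * (F₁ - (1 / 2) * r₁ * v₁ ^ 2) := by
    rw [hQ]; rw [hC]; ring
  have hQ1 : Q 1 = -(K₂ - 1) * (F₂ - (1 / 2) * r₂ * v₂ ^ 2) := by
    rw [hQ, hA, hB, hC]; ring
  have h0 : 0 < Q 0 := by
    rw [hQ0]; exact mul_pos (by linarith) (by linarith)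
  have h1 : Q 1 < 0 := by
    rw [hQ1]
    have : 0 < (K₂ - 1) * (F₂ - (1 / 2) * r₂ * v₂ ^ 2) :=
      mul_pos (by linarith) (by linarith)
    linarith
  refine ⟨hQ0, h0, hQ1, h1, ?_⟩
  -- existence via IVT
  have hcont : ContinuousOn Q (Set.Icc (0:ℝ) 1) := by
    have : Continuous Q := by
      have : Q = fun X => A * X ^ 2 + B * X + C := funext hQ
      rw [this]; continuity
    exact this.continuousOn
  have hsub := intermediate_value_Ioo' (le_of_lt one_pos) hcont
  have hmem : (0:ℝ) ∈ Set.Ioo (Q 1) (Q 0) := ⟨h1, h0⟩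
  obtain ⟨x, hx, hQx⟩ := hsub hmem
  refine ⟨x, ⟨hx, hQx⟩, ?_⟩
  rintro y ⟨hy, hQy⟩
  by_contra hne
  -- both roots: derive contradiction
  have ex : A * x ^ 2 + B * x + C = 0 := by rw [← hQ]; exact hQx
  have ey : A * y ^ 2 + B * y + C = 0 := by rw [← hQ]; exact hQy
  have hsum : A * (x + y) + B = 0 := by
    have hxy : y - x ≠ 0 := sub_ne_zero.mpr hne
    have : (y - x) * (A * (x + y) + B) = 0 := by linear_combination ey - ex
    rcases mul_eq_zero.mp this with h | h
    · exact absurd h hxy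
    · exact h
  have hCxy : C = A * (x * y) := by linear_combination ex - x * hsum
  have hq0 : Q 0 = A * (x * y) := by rw [hQ]; linear_combination hCxy
  have hq1 : Q 1 = A * ((1 - x) * (1 - y)) := by rw [hQ]; linear_combination hsum + hCxy
  obtain ⟨hx0, hx1⟩ := hx
  obtain ⟨hy0, hy1⟩ := hy
  rw [hq0] at h0
  rw [hq1] at h1
  nlinarith [mul_pos hx0 hy0, mul_pos (sub_pos.mpr hx1) (sub_pos.mpr hy1)]
end

section
/- Let K₁, K₂, p∞₁, p∞₂, E₁, E₂, r₁, r₂, v₁, v₂ be real numbers, let α₁ ∈ (0,1) and set α₂ = 1 − α₁, ρ_j = r_j/α_j, and p_j = (K_j − 1)·(E_j/α_j − ρ_j·v_j²/2) − K_j·p∞_j for j = 1,2. Then p₁ = p₂ if and only if A·α₁² + B·α₁ + C = 0, where A = K₁p∞₁ − K₂p∞₂, B = −(K₁−1)E₁ − (K₂−1)E₂ − K₁p∞₁ + K₂p∞₂ + (1/2)(K₁−1)r₁v₁² + (1/2)(K₂−1)r₂v₂², and C = (K₁−1)E₁ − (1/2)(K₁−1)r₁v₁². -/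
/-- In the scheme for the two-fluid system solved in time derivatives, the
equal-pressure condition `p₁ = p₂` is equivalent to the quadratic equation
`A·α₁² + B·α₁ + C = 0` with the coefficients (55)–(57). -/
theorem pressure_equality_iff_quadratic_solved
    (K₁ K₂ pinf₁ pinf₂ E₁ E₂ r₁ r₂ v₁ v₂ : ℝ)
    (α₁ : ℝ) (hα₁ : α₁ ∈ Set.Ioo (0 : ℝ) 1)
    (α₂ ρ₁ ρ₂ p₁ p₂ A B C : ℝ)
    (hα₂ : α₂ = 1 - α₁)
    (hρ₁ : ρ₁ = r₁ / α₁) (hρ₂ : ρ₂ = r₂ / α₂)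
    (hp₁ : p₁ = (K₁ - 1) * (E₁ / α₁ - ρ₁ * v₁ ^ 2 / 2) - K₁ * pinf₁)
    (hp₂ : p₂ = (K₂ - 1) * (E₂ / α₂ - ρ₂ * v₂ ^ 2 / 2) - K₂ * pinf₂)
    (hA : A = K₁ * pinf₁ - K₂ * pinf₂)
    (hB : B = -(K₁ - 1) * E₁ - (K₂ - 1) * E₂ - K₁ * pinf₁ + K₂ * pinf₂
      + (1 / 2) * (K₁ - 1) * r₁ * v₁ ^ 2 + (1 / 2) * (K₂ - 1) * r₂ * v₂ ^ 2)
    (hC : C = (K₁ - 1) * E₁ - (1 / 2) * (K₁ - 1) * r₁ * v₁ ^ 2) :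
    p₁ = p₂ ↔ A * α₁ ^ 2 + B * α₁ + C = 0 := by
  obtain ⟨h0, h1⟩ := hα₁
  have hα₁0 : α₁ ≠ 0 := ne_of_gt h0
  have hα₂0 : (1 : ℝ) - α₁ ≠ 0 := by linarith
  subst hρ₁ hρ₂ hp₁ hp₂ hA hB hC hα₂
  have key : (K₁ * pinf₁ - K₂ * pinf₂) * α₁ ^ 2 +
      (-(K₁ - 1) * E₁ - (K₂ - 1) * E₂ - K₁ * pinf₁ + K₂ * pinf₂
        + 1 / 2 * (K₁ - 1) * r₁ * v₁ ^ 2 + 1 / 2 * (K₂ - 1) * r₂ * v₂ ^ 2) * α₁ +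
      ((K₁ - 1) * E₁ - 1 / 2 * (K₁ - 1) * r₁ * v₁ ^ 2) =
      (((K₁ - 1) * (E₁ / α₁ - r₁ / α₁ * v₁ ^ 2 / 2) - K₁ * pinf₁)
        - ((K₂ - 1) * (E₂ / (1 - α₁) - r₂ / (1 - α₁) * v₂ ^ 2 / 2) - K₂ * pinf₂)) * (α₁ * (1 - α₁)) := by
    field_simp
    ring
  rw [key, mul_eq_zero, sub_eq_zero, eq_comm]
  have : α₁ * (1 - α₁) ≠ 0 := mul_ne_zero hα₁0 hα₂0
  tauto
end

section
/- Let K₁ > 1, K₂ > 1 and let p∞₁, p∞₂, E₁, E₂, r₁, r₂, v₁, v₂ be real numbers satisfying E₁ > (1/2)r₁v₁² and E₂ > (1/2)r₂v₂². Define A = K₁p∞₁ − K₂p∞₂, B = −(K₁−1)E₁ − (K₂−1)E₂ − K₁p∞₁ + K₂p∞₂ + (1/2)(K₁−1)r₁v₁² + (1/2)(K₂−1)r₂v₂², C = (K₁−1)E₁ − (1/2)(K₁−1)r₁v₁², and Q(X) = A·X² + B·X + C. Then Q(0) = (K₁−1)(E₁ − (1/2)r₁v₁²) > 0, Q(1)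 = −(K₂−1)(E₂ − (1/2)r₂v₂²) < 0, and Q has exactly one root in the open interval (0,1). -/
/-- Well-posedness of the third step of the scheme for the system solved in
time derivatives: under positivity of the internal energies, the quadratic
`Q` with coefficients (55)–(57) satisfies `Q(0) > 0`, `Q(1) < 0`, and has
exactly one root in the open interval `(0,1)`. -/
theorem quadratic_unique_root_in_unit_interval_solved
    (K₁ K₂ pinf₁ pinf₂ E₁ E₂ r₁ r₂ v₁ v₂ : ℝ)
    (hK₁ : 1 < K₁) (hK₂ : 1 < K₂)
    (hE₁ : (1 / 2) * r₁ * v₁ ^ 2 < E₁) (hE₂ : (1 / 2) * r₂ * v₂ ^ 2 < E₂)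
    (A B C : ℝ) (Q : ℝ → ℝ)
    (hA : A = K₁ * pinf₁ - K₂ * pinf₂)
    (hB : B = -(K₁ - 1) * E₁ - (K₂ - 1) * E₂ - K₁ * pinf₁ + K₂ * pinf₂
      + (1 / 2) * (K₁ - 1) * r₁ * v₁ ^ 2 + (1 / 2) * (K₂ - 1) * r₂ * v₂ ^ 2)
    (hC : C = (K₁ - 1) * E₁ - (1 / 2) * (K₁ - 1) * r₁ * v₁ ^ 2)
    (hQ : ∀ X, Q X = A * X ^ 2 + B * X + C) :
    Q 0 = (K₁ - 1) * (E₁ - (1 / 2) * r₁ * v₁ ^ 2) ∧ 0 < Q 0 ∧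
    Q 1 = -(K₂ - 1) * (E₂ - (1 / 2) * r₂ * v₂ ^ 2) ∧ Q 1 < 0 ∧
    (∃! x : ℝ, x ∈ Set.Ioo (0 : ℝ) 1 ∧ Q x = 0) := by
  have hQ0 : Q 0 = (K₁ - 1) * (E₁ - (1 / 2) * r₁ * v₁ ^ 2) := by
    rw [hQ]; rw [hC]; ring
  have hQ1 : Q 1 = -(K₂ - 1) * (E₂ - (1 / 2) * r₂ * v₂ ^ 2) := by
    rw [hQ]; rw [hA, hB, hC]; ring
  have h0 : 0 < Q 0 := by
    rw [hQ0]; have := sub_pos.mpr hK₁; have := sub_pos.mpr hE₁; positivity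
  have h1 : Q 1 < 0 := by
    rw [hQ1]
    have h2 := sub_pos.mpr hK₂; have h3 := sub_pos.mpr hE₂
    nlinarith
  refine ⟨hQ0, h0, hQ1, h1, ?_⟩
  have hQc : Continuous Q := by
    have : Q = fun X => A * X ^ 2 + B * X + C := funext hQ
    rw [this]; continuity
  have hex : ∃ x ∈ Set.Ioo (0 : ℝ) 1, Q x = 0 := by
    have := intermediate_value_Ioo' (le_of_lt one_pos) hQc.continuousOn
      (Set.mem_Ioo.mpr ⟨h1, h0⟩)
    obtain ⟨x, hx, hx0⟩ := this
    exact ⟨x, hx, hx0⟩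
  obtain ⟨x, hx, hx0⟩ := hex
  refine ⟨x, ⟨hx, hx0⟩, ?_⟩
  rintro y ⟨hy, hy0⟩
  by_contra hne
  have hxQ := hQ x; have hyQ := hQ y
  rw [hx0] at hxQ; rw [hy0] at hyQ
  have hxy : x - y ≠ 0 := sub_ne_zero.mpr (fun h => hne h.symm)
  have hfac : (x - y) * (A * (x + y) + B) = 0 := by linear_combination hyQ - hxQ
  have hsum : A * (x + y) = -B := by
    rcases mul_eq_zero.mp hfac with h | h
    · exact absurd h hxy
    · linarith
  have hCv : C = A * x * y := by linear_combination -hyQ - y * hsum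
  have hQ1v : Q 1 = A * (1 - x) * (1 - y) := by rw [hQ]; linear_combination hsum + hCv
  have hQ0v : Q 0 = A * x * y := by rw [hQ]; linear_combination hCv
  obtain ⟨hx1, hx2⟩ := hx; obtain ⟨hy1, hy2⟩ := hy
  have hP : 0 < x * y * ((1 - x) * (1 - y)) :=
    mul_pos (mul_pos hx1 hy1) (mul_pos (sub_pos.mpr hx2) (sub_pos.mpr hy2))
  have hneg : Q 0 * Q 1 < 0 := mul_neg_of_pos_of_neg h0 h1
  rw [hQ0v, hQ1v] at hneg
  nlinarith [mul_nonneg (sq_nonneg A) hP.le]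
end
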